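/- Let (X_i)_{i≥1} be i.i.d. standard Gaussian real random variables on a probability space, and let 0 < δ ≤ 1/2. Then with probability at least 1 − 4δ, for every positive integer k, |∑_{i=1}^k X_i² − k| ≤ 7·√k·log(k/δ). -/

import Mathlib

open MeasureTheory ProbabilityTheory Real
open scoped ENNReal NNReal

lemma aux_eq_pdf (t : ℝ) (x : ℝ) :
    gaussianPDFReal 0 1 x * Real.exp (t * x ^ 2)
      = (Real.sqrt (2 * π))⁻¹ * Real.exp (-(1/2 - t) * x ^ 2) := by
  simp only [gaussianPDFReal, NNReal.coe_one, mul_one, sub_zero]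
  rw [mul_assoc, ← Real.exp_add]
  ring_nf

lemma aux_integrable_pdf_sq (t : ℝ) (ht : t < 1/2) :
    Integrable (fun x : ℝ => gaussianPDFReal 0 1 x * Real.exp (t * x ^ 2)) := by
  simp only [aux_eq_pdf]
  exact (integrable_exp_neg_mul_sq (by linarith)).const_mul _

lemma aux_integral_pdf_sq (t : ℝ) (ht : t < 1/2) :
    ∫ x : ℝ, gaussianPDFReal 0 1 x * Real.exp (t * x ^ 2)
      = (Real.sqrt (1 - 2*t))⁻¹ := by
  have h1 : (0:ℝ) < 1/2 - t := by linarith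
  have h2 : (0:ℝ) < 1 - 2*t := by linarith
  simp only [aux_eq_pdf]
  rw [MeasureTheory.integral_const_mul, integral_gaussian,
    show π / (1/2 - t) = (2*π) / (1 - 2*t) by field_simp,
    Real.sqrt_div' _ (by positivity)]
  have h3 : Real.sqrt (2 * π) ≠ 0 := by positivity
  field_simp

lemma aux_gauss_int (t : ℝ) (ht : t < 1/2) :
    Integrable (fun x : ℝ => Real.exp (t * x ^ 2)) (gaussianReal 0 1)
    ∧ ∫ x : ℝ, Real.exp (t * x ^ 2) ∂(gaussianReal 0 1) = (Real.sqrt (1 - 2*t))⁻¹ := by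
  rw [gaussianReal_of_var_ne_zero _ one_ne_zero]
  have hm : Measurable fun x : ℝ => (gaussianPDFReal 0 1 x).toNNReal :=
    (measurable_gaussianPDFReal 0 1).real_toNNReal
  have hd : (gaussianPDF 0 1) = fun x => ((gaussianPDFReal 0 1 x).toNNReal : ℝ≥0∞) := by
    funext x; rw [gaussianPDF, ENNReal.ofReal]
  have hfe : (fun x => (gaussianPDFReal 0 1 x).toNNReal • Real.exp (t * x^2))
      = fun x => gaussianPDFReal 0 1 x * Real.exp (t*x^2) := by
    funext x
    simp [NNReal.smul_def, Real.coe_toNNReal _ (gaussianPDFReal_nonneg 0 1 x)]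
  rw [hd]
  constructor
  · rw [integrable_withDensity_iff_integrable_smul hm, hfe]
    exact aux_integrable_pdf_sq t ht
  · rw [integral_withDensity_eq_integral_smul hm, hfe, aux_integral_pdf_sq t ht]

lemma aux_mgf_sq {Ω : Type*} [MeasureSpace Ω] [IsProbabilityMeasure (ℙ : Measure Ω)]
    {Y : Ω → ℝ} (hY : Measurable Y) (hd : Measure.map Y ℙ = gaussianReal 0 1)
    (t : ℝ) (ht : t < 1/2) :
    Integrable (fun ω => Real.exp (t * (Y ω)^2)) ℙ ∧
    mgf (fun ω => (Y ω)^2) ℙ t = (Real.sqrt (1 - 2*t))⁻¹ := by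
  obtain ⟨hint, hval⟩ := aux_gauss_int t ht
  have hgm : Measurable fun x : ℝ => Real.exp (t * x ^ 2) :=
    ((measurable_id.pow_const 2).const_mul t).exp
  constructor
  · have := (integrable_map_measure hgm.aestronglyMeasurable hY.aemeasurable).mp
      (hd ▸ hint)
    exact this
  · rw [mgf]
    have : ∫ ω, Real.exp (t * (Y ω)^2) ∂ℙ
        = ∫ x, Real.exp (t * x ^ 2) ∂(Measure.map Y ℙ) :=
      (integral_map hY.aemeasurable hgm.aestronglyMeasurable).symm
    rw [← hval, ← hd, ← this]

lemma aux_chernoff {Ω : Type*} [MeasureSpace Ω] [IsProbabilityMeasure (ℙ : Measure Ω)]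
    (X : ℕ → Ω → ℝ) (hmeas : ∀ i, Measurable (X i))
    (hindep : iIndepFun X ℙ)
    (hdist : ∀ i, Measure.map (X i) ℙ = gaussianReal 0 1)
    (k : ℕ) (t ε : ℝ) (ht : t < 1/2) :
    (0 ≤ t → (ℙ {ω | ε ≤ ∑ i ∈ Finset.Icc 1 k, (X i ω)^2}).toReal
        ≤ Real.exp (-t*ε) * ((Real.sqrt (1 - 2*t))⁻¹)^k)
    ∧ (t ≤ 0 → (ℙ {ω | (∑ i ∈ Finset.Icc 1 k, (X i ω)^2) ≤ ε}).toReal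
        ≤ Real.exp (-t*ε) * ((Real.sqrt (1 - 2*t))⁻¹)^k) := by
  set Y : ℕ → Ω → ℝ := fun i ω => (X i ω)^2 with hY
  have hYmeas : ∀ i, Measurable (Y i) := fun i => (hmeas i).pow_const 2
  have hYindep : iIndepFun Y ℙ :=
    hindep.comp (fun _ x => x^2) (fun _ => measurable_id.pow_const 2)
  have h_int : ∀ i ∈ Finset.Icc 1 k, Integrable (fun ω => Real.exp (t * Y i ω)) ℙ :=
    fun i _ => (aux_mgf_sq (hmeas i) (hdist i) t ht).1
  have h_int_sum : Integrable (fun ω => Real.exp (t * (∑ i ∈ Finset.Icc 1 k, Y i) ω)) ℙ :=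
    hYindep.integrable_exp_mul_sum hYmeas h_int
  have h_mgf : mgf (∑ i ∈ Finset.Icc 1 k, Y i) ℙ t = ((Real.sqrt (1 - 2*t))⁻¹)^k := by
    rw [hYindep.mgf_sum hYmeas]
    rw [Finset.prod_congr rfl (fun i _ => (aux_mgf_sq (hmeas i) (hdist i) t ht).2),
      Finset.prod_const, Nat.card_Icc, Nat.add_sub_cancel]
  have hsum : ∀ ω, (∑ i ∈ Finset.Icc 1 k, Y i) ω = ∑ i ∈ Finset.Icc 1 k, (X i ω)^2 := by
    intro ω; simp [Finset.sum_apply, hY]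
  constructor
  · intro ht0
    have := measure_ge_le_exp_mul_mgf (μ := ℙ) (X := ∑ i ∈ Finset.Icc 1 k, Y i) ε ht0 h_int_sum
    rw [h_mgf] at this
    convert this using 3
    · simp [Finset.sum_apply, hY]; rfl
  · intro ht0
    have := measure_le_le_exp_mul_mgf (μ := ℙ) (X := ∑ i ∈ Finset.Icc 1 k, Y i) ε ht0 h_int_sum
    rw [h_mgf] at this
    convert this using 3
    · simp [Finset.sum_apply, hY]; rfl

lemma aux_pow_sqrt {u : ℝ} (hu : 0 < u) (k : ℕ) :
    ((Real.sqrt u)⁻¹)^k = Real.exp (-((k:ℝ) * Real.log u) / 2) := by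
  rw [← Real.exp_log (Real.sqrt_pos.mpr hu), Real.log_sqrt hu.le, ← Real.exp_neg,
    ← Real.exp_nat_mul]
  congr 1; ring

lemma aux_log4 : (1.38:ℝ) ≤ Real.log 4 := by
  rw [show (4:ℝ) = 2^2 by norm_num, Real.log_pow]
  push_cast
  nlinarith [Real.log_two_gt_d9]

lemma aux_log8 : (2.07:ℝ) ≤ Real.log 8 := by
  rw [show (8:ℝ) = 2^3 by norm_num, Real.log_pow]
  push_cast
  nlinarith [Real.log_two_gt_d9]

-- the key arithmetic inequality for the upper tail, k ≥ 2
lemma aux_arith {k : ℕ} (r L : ℝ) (hr : 1 ≤ r) (hrk : r^2 = (k:ℝ)) (hk2 : 2 ≤ k)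
    (hL : 1.38 ≤ L) (hL2 : k = 2 → 2.07 ≤ L) : 56*L + 16*r ≤ 49*r*L := by
  rcases eq_or_lt_of_le hk2 with h2 | h3
  · have hLL := hL2 h2.symm
    have hk : r^2 = (2:ℝ) := by rw [hrk, ← h2]; norm_num
    have hrlb : 1.414 ≤ r := by nlinarith
    have hrub : r ≤ 1.415 := by nlinarith
    nlinarith [mul_nonneg (sub_nonneg.mpr hLL) (show (0:ℝ) ≤ 49*r - 56 by nlinarith)]
  · have h3' : (3:ℝ) ≤ r^2 := by
      rw [hrk]; exact_mod_cast h3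
    have hrlb : 1.73 ≤ r := by nlinarith
    nlinarith [mul_nonneg (sub_nonneg.mpr hL) (sub_nonneg.mpr hrlb)]

lemma aux_upper {Ω : Type*} [MeasureSpace Ω] [IsProbabilityMeasure (ℙ : Measure Ω)]
    (X : ℕ → Ω → ℝ) (hmeas : ∀ i, Measurable (X i))
    (hindep : iIndepFun X ℙ)
    (hdist : ∀ i, Measure.map (X i) ℙ = gaussianReal 0 1)
    {δ : ℝ} (hδ0 : 0 < δ) (hδ1 : δ ≤ 1/4) {k : ℕ} (hk : 1 ≤ k) :
    (ℙ {ω | (k:ℝ) + 7 * Real.sqrt k * Real.log (k/δ) ≤ ∑ i ∈ Finset.Icc 1 k, (X i ω)^2}).toReal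
      ≤ (δ/k)^2 := by
  have hk1 : (1:ℝ) ≤ (k:ℝ) := by exact_mod_cast hk
  have hk0 : (0:ℝ) < (k:ℝ) := by linarith
  set L : ℝ := Real.log (k/δ) with hLdef
  set r : ℝ := Real.sqrt k with hrdef
  have hr0 : 0 ≤ r := Real.sqrt_nonneg _
  have hr2 : r^2 = (k:ℝ) := Real.sq_sqrt hk0.le
  have hr1 : 1 ≤ r := by nlinarith
  have hkδpos : (0:ℝ) < (k:ℝ)/δ := by positivity
  have hkδ : (4:ℝ) ≤ (k:ℝ)/δ := by
    rw [le_div_iff₀ hδ0]; nlinarith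
  have hL : 1.38 ≤ L := le_trans aux_log4 (Real.log_le_log (by norm_num) hkδ)
  have hL0 : (0:ℝ) < L := by linarith
  have hδk : Real.exp (-(2*L)) = (δ/(k:ℝ))^2 := by
    have h1 : Real.exp (-L) = δ/(k:ℝ) := by
      rw [Real.exp_neg, Real.exp_log hkδpos, inv_div]
    rw [show -(2*L) = -L + -L by ring, Real.exp_add, h1]; ring
  set a : ℝ := 7 * r * L with hadef
  have ha0 : 0 < a := by positivity
  rcases eq_or_lt_of_le hk with h1 | hk2'
  · -- k = 1
    have hk1' : k = 1 := h1.symm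
    subst hk1'
    have hr1' : r = 1 := by simp [hrdef]
    have hδ' : δ = Real.exp (-L) := by
      rw [Real.exp_neg, Real.exp_log hkδpos]; simp
    have hc := (aux_chernoff X hmeas hindep hdist 1 (3/7) ((1:ℕ) + a)
      (by norm_num)).1 (by norm_num)
    have hsq : ((Real.sqrt (1 - 2*(3/7:ℝ)))⁻¹)^1 ≤ 3 := by
      rw [pow_one, show (1 - 2*(3/7:ℝ)) = (7:ℝ)⁻¹ by norm_num, Real.sqrt_inv, inv_inv]
      rw [show (3:ℝ) = Real.sqrt 9 by
        rw [show (9:ℝ) = 3^2 by norm_num, Real.sqrt_sq]; norm_num]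
      exact Real.sqrt_le_sqrt (by norm_num)
    refine le_trans hc ?_
    have e1 : Real.exp (-(3/7) * (((1:ℕ):ℝ) + a)) ≤ Real.exp (-(3*L)) := by
      apply Real.exp_le_exp.mpr
      push_cast
      rw [hadef, hr1']
      nlinarith
    have e2 : Real.exp (-(3*L)) = δ^3 := by
      rw [hδ', ← Real.exp_nat_mul]
      congr 1; push_cast; ring
    calc Real.exp (-(3/7) * (((1:ℕ):ℝ) + a)) * ((Real.sqrt (1 - 2*(3/7:ℝ)))⁻¹)^1
        ≤ Real.exp (-(3*L)) * 3 := by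
          apply mul_le_mul e1 hsq (by positivity) (Real.exp_pos _).le
      _ = 3 * δ^3 := by rw [e2]; ring
      _ ≤ (δ/((1:ℕ):ℝ))^2 := by
          push_cast
          rw [div_one]
          nlinarith
  · -- k ≥ 2
    have hk2 : 2 ≤ k := hk2'
    have hL2 : k = 2 → 2.07 ≤ L := by
      intro hke
      subst hke
      refine le_trans aux_log8 (Real.log_le_log (by norm_num) ?_)
      push_cast
      rw [le_div_iff₀ hδ0]; nlinarith
    have h56 : 56*L + 16*r ≤ 49*r*L := aux_arith r L hr1 hr2 hk2 hL hL2
    have key : 8*L*(a + 2*(k:ℝ)) ≤ a^2 := by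
      rw [hadef, ← hr2]
      nlinarith [mul_pos (show (0:ℝ) < r by linarith) hL0]
    set t : ℝ := a/(2*(a+2*(k:ℝ))) with htdef
    have hA0 : (0:ℝ) < a + 2*(k:ℝ) := by positivity
    have ht0 : 0 ≤ t := by positivity
    have ht : t < 1/2 := by
      rw [htdef, div_lt_iff₀ (by positivity)]
      linarith
    have h1m2t : 1 - 2*t = 2*(k:ℝ)/(a+2*(k:ℝ)) := by
      rw [htdef]; field_simp; ring
    have hu : (0:ℝ) < 1 - 2*t := by rw [h1m2t]; positivity
    have hc := (aux_chernoff X hmeas hindep hdist k t ((k:ℝ) + a) ht).1 ht0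
    refine le_trans hc ?_
    rw [aux_pow_sqrt hu k, ← Real.exp_add, ← hδk]
    apply Real.exp_le_exp.mpr
    -- exponent inequality
    have hlog1 : Real.log (1-2*t) = -Real.log ((a+2*(k:ℝ))/(2*(k:ℝ))) := by
      rw [h1m2t, ← Real.log_inv, inv_div]
    have hlog2 : Real.log ((a+2*(k:ℝ))/(2*(k:ℝ))) ≤ a/(2*(k:ℝ)) := by
      have h := Real.log_le_sub_one_of_pos (show (0:ℝ) < (a+2*(k:ℝ))/(2*(k:ℝ)) by positivity)
      have he : (a+2*(k:ℝ))/(2*(k:ℝ)) - 1 = a/(2*(k:ℝ)) := by field_simp; ring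
      rw [he] at h
      exact h
    have expand : -(t*((k:ℝ)+a)) + (k:ℝ)*(a/(2*(k:ℝ)))/2 + 2*L
        = -((a^2 - 8*L*(a+2*(k:ℝ)))/(4*(a+2*(k:ℝ)))) := by
      rw [htdef]; field_simp; ring
    have hfrac : 0 ≤ (a^2 - 8*L*(a+2*(k:ℝ)))/(4*(a+2*(k:ℝ))) :=
      div_nonneg (by linarith) (by positivity)
    have hmono : -((k:ℝ) * Real.log (1-2*t))/2 ≤ (k:ℝ)*(a/(2*(k:ℝ)))/2 := by
      rw [hlog1]
      have := mul_le_mul_of_nonneg_left hlog2 (show (0:ℝ) ≤ (k:ℝ) by linarith)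
      linarith
    linarith


lemma aux_lower {Ω : Type*} [MeasureSpace Ω] [IsProbabilityMeasure (ℙ : Measure Ω)]
    (X : ℕ → Ω → ℝ) (hmeas : ∀ i, Measurable (X i))
    (hindep : iIndepFun X ℙ)
    (hdist : ∀ i, Measure.map (X i) ℙ = gaussianReal 0 1)
    {δ : ℝ} (hδ0 : 0 < δ) (hδ1 : δ ≤ 1/4) {k : ℕ} (hk : 1 ≤ k) :
    (ℙ {ω | (∑ i ∈ Finset.Icc 1 k, (X i ω)^2) ≤ (k:ℝ) - 7 * Real.sqrt k * Real.log (k/δ)}).toReal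
      ≤ (δ/k)^2 := by
  have hk1 : (1:ℝ) ≤ (k:ℝ) := by exact_mod_cast hk
  have hk0 : (0:ℝ) < (k:ℝ) := by linarith
  set L : ℝ := Real.log (k/δ) with hLdef
  set r : ℝ := Real.sqrt k with hrdef
  have hr0 : 0 ≤ r := Real.sqrt_nonneg _
  have hr2 : r^2 = (k:ℝ) := Real.sq_sqrt hk0.le
  have hr1 : 1 ≤ r := by nlinarith
  have hkδpos : (0:ℝ) < (k:ℝ)/δ := by positivity
  have hkδ : (4:ℝ) ≤ (k:ℝ)/δ := by
    rw [le_div_iff₀ hδ0]; nlinarith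
  have hL : 1.38 ≤ L := le_trans aux_log4 (Real.log_le_log (by norm_num) hkδ)
  have hL0 : (0:ℝ) < L := by linarith
  have hδk : Real.exp (-(2*L)) = (δ/(k:ℝ))^2 := by
    have h1 : Real.exp (-L) = δ/(k:ℝ) := by
      rw [Real.exp_neg, Real.exp_log hkδpos, inv_div]
    rw [show -(2*L) = -L + -L by ring, Real.exp_add, h1]; ring
  set a : ℝ := 7 * r * L with hadef
  have ha0 : 0 < a := by positivity
  set t : ℝ := -(a/(4*(k:ℝ))) with htdef
  have ht0 : t ≤ 0 := by rw [htdef]; simp; positivity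
  have ht : t < 1/2 := lt_of_le_of_lt ht0 (by norm_num)
  have h1m2t : 1 - 2*t = (2*(k:ℝ)+a)/(2*(k:ℝ)) := by
    rw [htdef]; field_simp; ring
  have hu : (0:ℝ) < 1 - 2*t := by rw [h1m2t]; positivity
  have hc := (aux_chernoff X hmeas hindep hdist k t ((k:ℝ) - a) ht).2 ht0
  refine le_trans hc ?_
  rw [aux_pow_sqrt hu k, ← Real.exp_add, ← hδk]
  apply Real.exp_le_exp.mpr
  have hlog2 : a/(2*(k:ℝ)+a) ≤ Real.log ((2*(k:ℝ)+a)/(2*(k:ℝ))) := by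
    have h := Real.log_le_sub_one_of_pos
      (show (0:ℝ) < 2*(k:ℝ)/(2*(k:ℝ)+a) by positivity)
    have hrwl : Real.log (2*(k:ℝ)/(2*(k:ℝ)+a))
        = -Real.log ((2*(k:ℝ)+a)/(2*(k:ℝ))) := by
      rw [← Real.log_inv, inv_div]
    have he : 2*(k:ℝ)/(2*(k:ℝ)+a) - 1 = -(a/(2*(k:ℝ)+a)) := by
      field_simp; ring
    rw [hrwl, he] at h
    linarith
  have expand : -(t*((k:ℝ)-a)) + -((k:ℝ)*(a/(2*(k:ℝ)+a)))/2
      = -(49*L^2/8) - 343*L^3/(8*(2*r+7*L)) := by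
    rw [htdef, hadef, ← hr2]; field_simp; ring
  have hmono : -((k:ℝ) * Real.log (1-2*t))/2 ≤ -((k:ℝ)*(a/(2*(k:ℝ)+a)))/2 := by
    rw [h1m2t]
    have := mul_le_mul_of_nonneg_left hlog2 (show (0:ℝ) ≤ (k:ℝ) by linarith)
    linarith
  have hpos3 : 0 ≤ 343*L^3/(8*(2*r+7*L)) := by positivity
  have hquad : 2*L ≤ 49*L^2/8 := by nlinarith
  linarith

lemma aux_zeta : HasSum (fun n : ℕ => (1:ℝ)/((n:ℝ)+1)^2) (π^2/6) := by
  have h0 := hasSum_zeta_two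
  have h1 : HasSum (fun n : ℕ => (1:ℝ)/(((n+1:ℕ)):ℝ)^2) (π^2/6) := by
    refine (hasSum_nat_add_iff (f := fun m : ℕ => (1:ℝ)/((m:ℝ))^2) 1).mpr ?_
    simpa using h0
  convert h1 using 2 with n
  push_cast
  ring

lemma aux_series {δ : ℝ} (hδ0 : 0 < δ) (hδ1 : δ ≤ 1/4) :
    ∑' (n : ℕ), ENNReal.ofReal (2*(δ/((n:ℝ)+1))^2) ≤ ENNReal.ofReal (4*δ) := by
  have heq : (fun n : ℕ => 2*(δ/((n:ℝ)+1))^2)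
      = fun n : ℕ => (2*δ^2) * ((1:ℝ)/((n:ℝ)+1)^2) := by
    funext n
    rw [div_pow]
    ring
  have h1 : HasSum (fun n : ℕ => 2*(δ/((n:ℝ)+1))^2) (2*δ^2 * (π^2/6)) := by
    rw [heq]; exact aux_zeta.mul_left _
  rw [← ENNReal.ofReal_tsum_of_nonneg (fun n => by positivity) h1.summable, h1.tsum_eq]
  apply ENNReal.ofReal_le_ofReal
  have hπ : π^2 ≤ 10 := by nlinarith [Real.pi_lt_d2, Real.pi_pos]
  have hδ2 : δ^2 ≤ δ/4 := by nlinarith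
  nlinarith

/-- If `(X i)` are i.i.d. standard Gaussian real random variables and `0 < δ ≤ 1/2`, then
with probability at least `1 - 4δ`, for every positive integer `k`,
`|∑_{i=1}^k X i ^ 2 - k| ≤ 7 √k log(k/δ)`. -/
theorem stmt_0 {Ω : Type*} [MeasureSpace Ω] [IsProbabilityMeasure (ℙ : Measure Ω)]
    (X : ℕ → Ω → ℝ) (hmeas : ∀ i, Measurable (X i))
    (hindep : iIndepFun X ℙ)
    (hdist : ∀ i, Measure.map (X i) ℙ = gaussianReal 0 1)
    (δ : ℝ) (hδ0 : 0 < δ) (hδ1 : δ ≤ 1 / 2) :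
    1 - 4 * δ ≤ (ℙ {ω | ∀ k : ℕ, 1 ≤ k →
        |(∑ i ∈ Finset.Icc 1 k, (X i ω) ^ 2) - (k : ℝ)| ≤
          7 * Real.sqrt k * Real.log (k / δ)}).toReal := by
  rcases le_or_gt δ (1/4) with hδ4 | hδ4
  swap
  · refine le_trans ?_ ENNReal.toReal_nonneg
    linarith
  set G : Set Ω := {ω | ∀ k : ℕ, 1 ≤ k →
        |(∑ i ∈ Finset.Icc 1 k, (X i ω) ^ 2) - (k : ℝ)| ≤
          7 * Real.sqrt k * Real.log (k / δ)} with hG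
  set A : ℕ → Set Ω := fun k => {ω | (k:ℝ) + 7 * Real.sqrt k * Real.log (k/δ)
      ≤ ∑ i ∈ Finset.Icc 1 k, (X i ω)^2} with hA
  set B : ℕ → Set Ω := fun k => {ω | (∑ i ∈ Finset.Icc 1 k, (X i ω)^2)
      ≤ (k:ℝ) - 7 * Real.sqrt k * Real.log (k/δ)} with hB
  have hsub : Gᶜ ⊆ ⋃ (n : ℕ), (A (n+1) ∪ B (n+1)) := by
    intro ω hω
    simp only [hG, Set.mem_compl_iff, Set.mem_setOf_eq] at hω
    push_neg at hω
    obtain ⟨k, hk1, hk2⟩ := hω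
    rw [Set.mem_iUnion]
    refine ⟨k - 1, ?_⟩
    have hkk : k - 1 + 1 = k := Nat.succ_pred_eq_of_pos hk1
    rw [hkk]
    rcases lt_abs.mp hk2 with h | h
    · left
      simp only [hA, Set.mem_setOf_eq]
      linarith
    · right
      simp only [hB, Set.mem_setOf_eq]
      linarith
  have hAB : ∀ n : ℕ, ℙ (A (n+1) ∪ B (n+1)) ≤ ENNReal.ofReal (2*(δ/((n:ℝ)+1))^2) := by
    intro n
    refine le_trans (measure_union_le _ _) ?_
    have hcast : ((n+1:ℕ):ℝ) = (n:ℝ)+1 := by push_cast; ring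
    have hu' : (ℙ (A (n+1))).toReal ≤ (δ/((n:ℝ)+1))^2 := by
      rw [← hcast]
      exact aux_upper X hmeas hindep hdist hδ0 hδ4 (k := n+1) (by omega)
    have hl' : (ℙ (B (n+1))).toReal ≤ (δ/((n:ℝ)+1))^2 := by
      rw [← hcast]
      exact aux_lower X hmeas hindep hdist hδ0 hδ4 (k := n+1) (by omega)
    have hu2 : ℙ (A (n+1)) ≤ ENNReal.ofReal ((δ/((n:ℝ)+1))^2) := by
      rw [← ENNReal.ofReal_toReal (measure_ne_top ℙ _)]
      exact ENNReal.ofReal_le_ofReal hu'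
    have hl2 : ℙ (B (n+1)) ≤ ENNReal.ofReal ((δ/((n:ℝ)+1))^2) := by
      rw [← ENNReal.ofReal_toReal (measure_ne_top ℙ _)]
      exact ENNReal.ofReal_le_ofReal hl'
    calc ℙ (A (n+1)) + ℙ (B (n+1))
        ≤ ENNReal.ofReal ((δ/((n:ℝ)+1))^2) + ENNReal.ofReal ((δ/((n:ℝ)+1))^2) :=
          add_le_add hu2 hl2
      _ = ENNReal.ofReal (2*(δ/((n:ℝ)+1))^2) := by
          rw [← ENNReal.ofReal_add (by positivity) (by positivity)]
          congr 1; ring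
  have hcompl : ℙ Gᶜ ≤ ENNReal.ofReal (4*δ) :=
    le_trans (measure_mono hsub) (le_trans (measure_iUnion_le _)
      (le_trans (ENNReal.tsum_le_tsum hAB) (aux_series hδ0 hδ4)))
  have h1 : (1:ℝ≥0∞) ≤ ℙ G + ENNReal.ofReal (4*δ) := by
    calc (1:ℝ≥0∞) = ℙ (G ∪ Gᶜ) := by rw [Set.union_compl_self, measure_univ]
      _ ≤ ℙ G + ℙ Gᶜ := measure_union_le _ _
      _ ≤ ℙ G + ENNReal.ofReal (4*δ) := add_le_add_right hcompl _
  have h2 : (1:ℝ≥0∞) - ENNReal.ofReal (4*δ) ≤ ℙ G := tsub_le_iff_right.mpr h1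
  have h3 := ENNReal.toReal_mono (measure_ne_top ℙ G) h2
  rw [ENNReal.toReal_sub_of_le (ENNReal.ofReal_le_one.mpr (by linarith)) ENNReal.one_ne_top] at h3
  rw [ENNReal.toReal_one, ENNReal.toReal_ofReal (by positivity)] at h3
  linarith
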